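/- With the hypotheses of the previous statement (an effective set $\mathcal{Q}$ of $\delta = (d+1)(d+2)/2$ points arranged with $\nu$ points on the $\nu$-th of $d+1$ lines in general position, avoiding intersection points), the evaluation map $e_{\mathcal{Q}} : \mathcal{F}_d \to \mathbb{F}_q^{\mathcal{Q}}$, $f \mapsto (f(P))_{P \in \mathcal{Q}}$, is a linear isomorphism. -/

import Mathlib

open MvPolynomial Finset

noncomputable def linePoly {F : Type*} [Field F] (u v w : F) : MvPolynomial (Fin 2) F :=
  C u * X 0 + C v * X 1 + C w

noncomputable def sepPoly {F : Type*} [Field F] (p q : F × F) : MvPolynomial (Fin 2) F :=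
  open scoped Classical in
  if p.1 = q.1 then X 1 - C q.2 else X 0 - C q.1

lemma eval_linePoly {F : Type*} [Field F] (u v w : F) (p : F × F) :
    eval ![p.1, p.2] (linePoly u v w) = u * p.1 + v * p.2 + w := by
  simp [linePoly]

lemma linePoly_totalDegree {F : Type*} [Field F] (u v w : F) :
    (linePoly u v w).totalDegree ≤ 1 := by
  have h1 : (C u * X 0 : MvPolynomial (Fin 2) F).totalDegree ≤ 1 :=
    (totalDegree_mul _ _).trans (by simp [totalDegree_C, totalDegree_X])
  have h2 : (C v * X 1 : MvPolynomial (Fin 2) F).totalDegree ≤ 1 :=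
    (totalDegree_mul _ _).trans (by simp [totalDegree_C, totalDegree_X])
  have h3 : (C w : MvPolynomial (Fin 2) F).totalDegree ≤ 1 := by simp [totalDegree_C]
  exact (totalDegree_add _ _).trans (max_le ((totalDegree_add _ _).trans (max_le h1 h2)) h3)

lemma sepPoly_totalDegree {F : Type*} [Field F] (p q : F × F) :
    (sepPoly p q).totalDegree ≤ 1 := by
  classical
  rw [sepPoly]
  split
  · exact (totalDegree_sub _ _).trans (by simp [totalDegree_C, totalDegree_X])
  · exact (totalDegree_sub _ _).trans (by simp [totalDegree_C, totalDegree_X])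

lemma eval_sepPoly_self {F : Type*} [Field F] (p q : F × F) :
    eval ![q.1, q.2] (sepPoly p q) = 0 := by
  classical
  rw [sepPoly]
  split <;> simp

lemma eval_sepPoly_ne {F : Type*} [Field F] {p q : F × F} (h : p ≠ q) :
    eval ![p.1, p.2] (sepPoly p q) ≠ 0 := by
  classical
  rw [sepPoly]
  split
  · next h1 =>
      simp only [map_sub, eval_X, eval_C, Matrix.cons_val_one, Matrix.head_cons, Matrix.cons_val_zero]
      intro h2
      exact h (Prod.ext h1 (by linear_combination h2))
  · next h1 =>
      simp only [map_sub, eval_X, eval_C, Matrix.cons_val_zero]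
      intro h2
      exact h1 (by linear_combination h2)

noncomputable def gPoly {F : Type*} [Field F] {d : ℕ} (a b c : Fin (d + 1) → F)
    (P : (ν : Fin (d + 1)) → Fin (ν.1 + 1) → F × F)
    (s : Σ ν : Fin (d + 1), Fin (ν.1 + 1)) : MvPolynomial (Fin 2) F :=
  open scoped Classical in
  (∏ j ∈ Finset.univ.filter (fun j => s.1 < j), linePoly (a j) (b j) (c j)) *
    ∏ k' ∈ Finset.univ.erase s.2, sepPoly (P s.1 s.2) (P s.1 k')

lemma gPoly_totalDegree {F : Type*} [Field F] {d : ℕ} (a b c : Fin (d + 1) → F)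
    (P : (ν : Fin (d + 1)) → Fin (ν.1 + 1) → F × F)
    (s : Σ ν : Fin (d + 1), Fin (ν.1 + 1)) :
    (gPoly a b c P s).totalDegree ≤ d := by
  classical
  rw [gPoly]
  refine (totalDegree_mul _ _).trans ?_
  have h1 : (∏ j ∈ Finset.univ.filter (fun j => s.1 < j),
      linePoly (a j) (b j) (c j)).totalDegree ≤ d - s.1.1 := by
    refine (totalDegree_finset_prod _ _).trans ?_
    calc ∑ j ∈ Finset.univ.filter (fun j => s.1 < j), (linePoly (a j) (b j) (c j)).totalDegree
        ≤ ∑ _j ∈ Finset.univ.filter (fun j => s.1 < j), 1 :=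
          Finset.sum_le_sum fun j _ => linePoly_totalDegree _ _ _
      _ = d - s.1.1 := by
          rw [Finset.sum_const, smul_eq_mul, mul_one, Finset.filter_lt_eq_Ioi, Fin.card_Ioi]
          omega
  have h2 : (∏ k' ∈ Finset.univ.erase s.2,
      sepPoly (P s.1 s.2) (P s.1 k')).totalDegree ≤ s.1.1 := by
    refine (totalDegree_finset_prod _ _).trans ?_
    calc ∑ k' ∈ Finset.univ.erase s.2, (sepPoly (P s.1 s.2) (P s.1 k')).totalDegree
        ≤ ∑ _k' ∈ Finset.univ.erase s.2, 1 :=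
          Finset.sum_le_sum fun k' _ => sepPoly_totalDegree _ _
      _ = s.1.1 := by
          rw [Finset.sum_const, smul_eq_mul, mul_one, Finset.card_erase_of_mem (Finset.mem_univ _)]
          simp
  have := add_le_add h1 h2
  omega

section Eval
variable {F : Type*} [Field F] {d : ℕ} {a b c : Fin (d + 1) → F}
  {P : (ν : Fin (d + 1)) → Fin (ν.1 + 1) → F × F}

lemma gPoly_eval_lt (hPon : ∀ ν k, a ν * (P ν k).1 + b ν * (P ν k).2 + c ν = 0)
    (s : Σ ν : Fin (d + 1), Fin (ν.1 + 1)) (μ : Fin (d + 1)) (k : Fin (μ.1 + 1))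
    (h : s.1 < μ) :
    eval ![(P μ k).1, (P μ k).2] (gPoly a b c P s) = 0 := by
  classical
  rw [gPoly, map_mul, map_prod]
  apply mul_eq_zero_of_left
  exact Finset.prod_eq_zero (Finset.mem_filter.mpr ⟨Finset.mem_univ μ, h⟩)
    (by rw [eval_linePoly]; exact hPon μ k)

lemma gPoly_eval_same (s : Σ ν : Fin (d + 1), Fin (ν.1 + 1)) (k : Fin (s.1.1 + 1))
    (h : k ≠ s.2) :
    eval ![(P s.1 k).1, (P s.1 k).2] (gPoly a b c P s) = 0 := by
  classical
  rw [gPoly, map_mul, map_prod, map_prod]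
  apply mul_eq_zero_of_right
  exact Finset.prod_eq_zero (Finset.mem_erase.mpr ⟨h, Finset.mem_univ k⟩)
    (eval_sepPoly_self _ _)

lemma gPoly_eval_self (hPinj : ∀ ν, Function.Injective (P ν))
    (hPavoid : ∀ ν k j, j ≠ ν → a j * (P ν k).1 + b j * (P ν k).2 + c j ≠ 0)
    (s : Σ ν : Fin (d + 1), Fin (ν.1 + 1)) :
    eval ![(P s.1 s.2).1, (P s.1 s.2).2] (gPoly a b c P s) ≠ 0 := by
  classical
  rw [gPoly, map_mul, map_prod, map_prod]
  apply mul_ne_zero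
  · rw [Finset.prod_ne_zero_iff]
    intro j hj
    rw [eval_linePoly]
    exact hPavoid s.1 s.2 j (Fin.ne_of_gt (Finset.mem_filter.mp hj).2)
  · rw [Finset.prod_ne_zero_iff]
    intro k' hk'
    exact eval_sepPoly_ne fun he => (Finset.mem_erase.mp hk').1 (hPinj s.1 he).symm

end Eval


/-- Under the hypotheses of Statement 2, the evaluation map
`e_Q : F_d → F^Q`, `f ↦ (f(P))_{P ∈ Q}`, from the space of polynomials of total
degree at most `d` to functions on the effective set `Q`, is a (linear) isomorphism. -/
theorem stmt_3 {F : Type*} [Field F] (d : ℕ)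
    (a b c : Fin (d + 1) → F) (hab : ∀ i, (a i, b i) ≠ (0, 0))
    (hdist : ∀ i j : Fin (d + 1), i ≠ j →
      {p : F × F | a i * p.1 + b i * p.2 + c i = 0} ≠
        {p : F × F | a j * p.1 + b j * p.2 + c j = 0})
    (hgen : ∀ i j k : Fin (d + 1), i ≠ j → i ≠ k → j ≠ k →
      ¬∃ p : F × F, a i * p.1 + b i * p.2 + c i = 0 ∧
        a j * p.1 + b j * p.2 + c j = 0 ∧ a k * p.1 + b k * p.2 + c k = 0)
    (P : (ν : Fin (d + 1)) → Fin (ν.1 + 1) → F × F)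
    (hPinj : ∀ ν, Function.Injective (P ν))
    (hPon : ∀ ν k, a ν * (P ν k).1 + b ν * (P ν k).2 + c ν = 0)
    (hPavoid : ∀ ν k j, j ≠ ν → a j * (P ν k).1 + b j * (P ν k).2 + c j ≠ 0) :
    Function.Bijective
      (fun f : MvPolynomial.restrictTotalDegree (Fin 2) F d =>
        (fun s : Σ ν : Fin (d + 1), Fin (ν.1 + 1) =>
          MvPolynomial.eval ![(P s.1 s.2).1, (P s.1 s.2).2]
            (f : MvPolynomial (Fin 2) F))) := by
  classical
  set Q := (Σ ν : Fin (d + 1), Fin (ν.1 + 1)) with hQ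
  -- the evaluation linear map
  let E : MvPolynomial.restrictTotalDegree (Fin 2) F d →ₗ[F] (Q → F) :=
    { toFun := fun f s => MvPolynomial.eval ![(P s.1 s.2).1, (P s.1 s.2).2]
        (f : MvPolynomial (Fin 2) F)
      map_add' := fun f g => by funext s; simp
      map_smul' := fun r f => by funext s; simp [MvPolynomial.smul_eval] }
  have hgmem : ∀ s : Q, gPoly a b c P s ∈ MvPolynomial.restrictTotalDegree (Fin 2) F d :=
    fun s => (MvPolynomial.mem_restrictTotalDegree _ _ _).mpr (gPoly_totalDegree a b c P s)
  -- the interpolating family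
  have hli : LinearIndependent F
      (fun s : Q => (fun t : Q =>
        MvPolynomial.eval ![(P t.1 t.2).1, (P t.1 t.2).2] (gPoly a b c P s))) := by
    rw [Fintype.linearIndependent_iff]
    intro coef hsum
    have key : ∀ n : ℕ, ∀ μ : Fin (d + 1), d - μ.1 < n → ∀ k, coef ⟨μ, k⟩ = 0 := by
      intro n
      induction n with
      | zero => intro μ hμ; omega
      | succ n ih =>
        intro μ hμ k
        have h0 := congrFun hsum ⟨μ, k⟩
        rw [Finset.sum_apply] at h0
        simp only [Pi.smul_apply, smul_eq_mul, Pi.zero_apply] at h0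
        rw [Finset.sum_eq_single (⟨μ, k⟩ : Q)] at h0
        · exact (mul_eq_zero.mp h0).resolve_right
            (gPoly_eval_self hPinj hPavoid (⟨μ, k⟩ : Q))
        · rintro ⟨ν, k'⟩ - hne
          rcases lt_trichotomy ν μ with hlt | heq | hgt
          · rw [gPoly_eval_lt hPon ⟨ν, k'⟩ μ k hlt, mul_zero]
          · subst heq
            have hkk : k ≠ k' := by
              intro h; exact hne (by rw [h])
            rw [gPoly_eval_same ⟨ν, k'⟩ k hkk, mul_zero]
          · rw [ih ν (by omega) k', zero_mul]
        · intro h; exact absurd (Finset.mem_univ _) h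
    rintro ⟨μ, k⟩
    exact key (d - μ.1 + 1) μ (by omega) k
  have hcard : Fintype.card Q = Module.finrank F (Q → F) :=
    (Module.finrank_fintype_fun_eq_card F).symm
  have hspan := hli.span_eq_top_of_card_eq_finrank hcard
  have hrange : LinearMap.range E = ⊤ := by
    rw [← top_le_iff, ← hspan, Submodule.span_le]
    rintro _ ⟨s, rfl⟩
    exact ⟨⟨gPoly a b c P s, hgmem s⟩, rfl⟩
  -- dimension bound for the domain
  have hsum_eq : ∀ n : Fin 2 →₀ ℕ, (n.sum fun _ e => e) = n 0 + n 1 := fun n => by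
    rw [Finsupp.sum_fintype _ _ (fun _ => rfl), Fin.sum_univ_two]
  set S : Set (Fin 2 →₀ ℕ) := {n | (n.sum fun _ e => e) ≤ d} with hS
  have hφ : ∃ φ : S → Q, Function.Injective φ := by
    have hb : ∀ n : S, (n : Fin 2 →₀ ℕ) 0 + (n : Fin 2 →₀ ℕ) 1 < d + 1 := by
      rintro ⟨n, hn⟩
      have := hsum_eq n
      simp only [hS, Set.mem_setOf_eq] at hn
      show n 0 + n 1 < d + 1
      omega
    refine ⟨fun n => ⟨⟨(n : Fin 2 →₀ ℕ) 0 + (n : Fin 2 →₀ ℕ) 1, hb n⟩,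
      ⟨(n : Fin 2 →₀ ℕ) 0, by show (n : Fin 2 →₀ ℕ) 0 < (n : Fin 2 →₀ ℕ) 0 + (n : Fin 2 →₀ ℕ) 1 + 1; omega⟩⟩, ?_⟩
    intro n m h
    have h1 : (n : Fin 2 →₀ ℕ) 0 + (n : Fin 2 →₀ ℕ) 1
        = (m : Fin 2 →₀ ℕ) 0 + (m : Fin 2 →₀ ℕ) 1 :=
      congrArg (fun s : Q => s.1.1) h
    have h2 : (n : Fin 2 →₀ ℕ) 0 = (m : Fin 2 →₀ ℕ) 0 :=
      congrArg (fun s : Q => s.2.1) h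
    refine Subtype.ext (Finsupp.ext fun i => ?_)
    fin_cases i
    · exact h2
    · show (n : Fin 2 →₀ ℕ) 1 = (m : Fin 2 →₀ ℕ) 1
      omega
  obtain ⟨φ, hφinj⟩ := hφ
  have hSfin : Finite S := Finite.of_injective φ hφinj
  haveI : Fintype S := Fintype.ofFinite S
  have hcardS : Fintype.card S ≤ Fintype.card Q := Fintype.card_le_of_injective φ hφinj
  have hfr : Module.finrank F (MvPolynomial.restrictTotalDegree (Fin 2) F d)
      = Fintype.card S :=
    Module.finrank_eq_card_basis (MvPolynomial.basisRestrictSupport F S)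
  have hker : LinearMap.ker E = ⊥ := by
    have h1 := LinearMap.finrank_range_add_finrank_ker E
    rw [hrange, finrank_top] at h1
    have h3 : Fintype.card S ≤ Module.finrank F (Q → F) := hcardS.trans (le_of_eq hcard)
    have h2 : Module.finrank F (LinearMap.ker E) = 0 := by omega
    exact Submodule.finrank_eq_zero.mp h2
  exact ⟨LinearMap.ker_eq_bot.mp hker, LinearMap.range_eq_top.mp hrange⟩
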